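/- Let p be a prime, L a field of characteristic p, and f ∈ m = (x_1,…,x_n) ⊂ L[x_1,…,x_n] with p^L·fpt(f) ∈ ℕ for some L ∈ ℕ. Then for any g ∈ m: fpt(f+g) ≤ fpt(f) if and only if (f+g)^{p^L·fpt(f)} ∈ (x_1^{p^L},…,x_n^{p^L}). -/

import Mathlib

open MvPolynomial

/-- The `e`-th truncation of the non-terminating base `p` expansion of `α ∈ (0,1]`:
the unique multiple of `p^{-e}` with `⟨α⟩_e < α ≤ ⟨α⟩_e + p^{-e}`
(with the convention `⟨α⟩_e = 0` for `α ≤ 0`). -/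
noncomputable def trunc (p e : ℕ) (α : ℝ) : ℝ :=
  if α ≤ 0 then 0 else (⌈α * (p : ℝ) ^ e⌉ - 1) / (p : ℝ) ^ e

/-- The `e`-th digit (`e ≥ 1`) of the non-terminating base `p` expansion of `α ∈ (0,1]`,
namely `p^e ⟨α⟩_e - p^e ⟨α⟩_{e-1}`. -/
noncomputable def digit (p e : ℕ) (α : ℝ) : ℤ :=
  (⌈α * (p : ℝ) ^ e⌉ - 1) - p * (⌈α * (p : ℝ) ^ (e - 1)⌉ - 1)

/-- Least positive residue of `m` modulo `b`: the unique `r` with `1 ≤ r ≤ b`, `r ≡ m (mod b)`. -/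
def lpr (m b : ℤ) : ℤ := if m % b = 0 then b else m % b

/-- The `e`-th Frobenius power `m^{[p^e]} = (x_1^{p^e}, …, x_n^{p^e})`. -/
noncomputable def frobPow (p n : ℕ) (K : Type*) [Field K] (e : ℕ) :
    Ideal (MvPolynomial (Fin n) K) :=
  Ideal.span (Set.range fun i => (X i : MvPolynomial (Fin n) K) ^ p ^ e)

/-- `ν_f(p^e) = max { N | f^N ∉ m^{[p^e]} }`. -/
noncomputable def nu (p : ℕ) {n : ℕ} {K : Type*} [Field K]
    (f : MvPolynomial (Fin n) K) (e : ℕ) : ℕ :=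
  sSup {N : ℕ | f ^ N ∉ frobPow p n K e}

/-- The F-pure threshold `fpt(f) = lim_e ν_f(p^e)/p^e`; since the sequence is
non-decreasing and bounded, the limit equals the supremum. -/
noncomputable def fpt (p : ℕ) {n : ℕ} {K : Type*} [Field K]
    (f : MvPolynomial (Fin n) K) : ℝ :=
  ⨆ e : ℕ, (nu p f e : ℝ) / (p : ℝ) ^ e

/-- The maximal ideal `m = (x_1, …, x_n)`. -/
noncomputable def mIdeal (n : ℕ) (K : Type*) [Field K] : Ideal (MvPolynomial (Fin n) K) :=
  Ideal.span (Set.range (X : Fin n → MvPolynomial (Fin n) K))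

section Aux
variable {p n : ℕ} {K : Type*} [Field K]

lemma mem_frobPow_iff {z : MvPolynomial (Fin n) K} {e : ℕ} :
    z ∈ frobPow p n K e ↔ ∀ m ∈ z.support, ∃ i, p ^ e ≤ m i := by
  have hrange : (Set.range fun i => (X i : MvPolynomial (Fin n) K) ^ p ^ e)
      = (fun s => monomial s (1 : K)) '' (Set.range fun i : Fin n => Finsupp.single i (p ^ e)) := by
    rw [← Set.range_comp]
    refine congrArg _ (funext fun i => ?_)
    simp [Function.comp, X_pow_eq_monomial]
  rw [frobPow, hrange, mem_ideal_span_monomial_image]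
  constructor
  · intro H m hm
    obtain ⟨si, ⟨i, rfl⟩, hle⟩ := H m hm
    exact ⟨i, Finsupp.single_le_iff.mp hle⟩
  · intro H m hm
    obtain ⟨i, hi⟩ := H m hm
    exact ⟨Finsupp.single i (p ^ e), ⟨i, rfl⟩, Finsupp.single_le_iff.mpr hi⟩

lemma one_not_mem_frobPow (hp : p.Prime) (e : ℕ) : (1 : MvPolynomial (Fin n) K) ∉ frobPow p n K e := by
  rw [mem_frobPow_iff]
  intro H
  obtain ⟨i, hi⟩ := H 0 (mem_support_iff.mpr (by simp))
  simp only [Finsupp.coe_zero, Pi.zero_apply, Nat.le_zero] at hi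
  exact pow_ne_zero e hp.ne_zero hi

lemma freshman (hp : p.Prime) [CharP K p] (z : MvPolynomial (Fin n) K) (s : ℕ) :
    z ^ p ^ s = ∑ m ∈ z.support, monomial (p ^ s • m) (coeff m z ^ p ^ s) := by
  haveI : Fact p.Prime := ⟨hp⟩
  induction s with
  | zero => simp [support_sum_monomial_coeff]
  | succ s ih =>
    have h1 : z ^ p ^ (s + 1) = (z ^ p ^ s) ^ p := by rw [← pow_mul, pow_succ]
    rw [h1, ih, sum_pow_char]
    refine Finset.sum_congr rfl fun m _ => ?_
    rw [monomial_pow, ← pow_mul, ← pow_succ, smul_smul, ← pow_succ']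

lemma coeff_pow_frob (hp : p.Prime) [CharP K p] (z : MvPolynomial (Fin n) K) (s : ℕ)
    (m : Fin n →₀ ℕ) : coeff (p ^ s • m) (z ^ p ^ s) = coeff m z ^ p ^ s := by
  have hq : p ^ s ≠ 0 := pow_ne_zero s hp.ne_zero
  rw [freshman hp z s, coeff_sum]
  by_cases hm : m ∈ z.support
  · rw [Finset.sum_eq_single m]
    · simp [coeff_monomial]
    · intro b _ hb
      rw [coeff_monomial, if_neg]
      intro hcon
      exact hb (by ext i; have := DFunLike.congr_fun hcon i; simpa [Nat.mul_left_cancel_iff (Nat.pos_of_ne_zero hq)] using this)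
    · exact fun h => absurd hm h
  · have : coeff m z = 0 := by simpa using hm
    rw [this, zero_pow hq]
    refine Finset.sum_eq_zero fun b hb => ?_
    rw [coeff_monomial, if_neg]
    intro hcon
    exact hm (by rwa [show b = m by ext i; have := DFunLike.congr_fun hcon i; simpa [Nat.mul_left_cancel_iff (Nat.pos_of_ne_zero hq)] using this] at hb)

lemma support_pow_frob (hp : p.Prime) [CharP K p] {z : MvPolynomial (Fin n) K} {s : ℕ}
    {m' : Fin n →₀ ℕ} (hm' : m' ∈ (z ^ p ^ s).support) :
    ∃ m ∈ z.support, m' = p ^ s • m := by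
  rw [freshman hp z s] at hm'
  have h0 : coeff m' (∑ m ∈ z.support, monomial (p ^ s • m) (coeff m z ^ p ^ s)) ≠ 0 :=
    mem_support_iff.mp hm'
  rw [coeff_sum] at h0
  obtain ⟨m, hm, hne⟩ := Finset.exists_ne_zero_of_sum_ne_zero h0
  rw [coeff_monomial] at hne
  refine ⟨m, hm, ?_⟩
  by_contra hcon
  exact hne (if_neg fun h => hcon h.symm)

lemma frob_mem (hp : p.Prime) [CharP K p] {z : MvPolynomial (Fin n) K} {e : ℕ}
    (hz : z ∈ frobPow p n K e) (s : ℕ) : z ^ p ^ s ∈ frobPow p n K (e + s) := by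
  rw [mem_frobPow_iff] at hz ⊢
  intro m' hm'
  obtain ⟨m, hm, rfl⟩ := support_pow_frob hp hm'
  obtain ⟨i, hi⟩ := hz m hm
  refine ⟨i, ?_⟩
  have : (p ^ s • m) i = p ^ s * m i := rfl
  rw [this, pow_add, mul_comm (p ^ e)]
  exact Nat.mul_le_mul_left _ hi

lemma key_lemma (hp : p.Prime) [CharP K p] {h : MvPolynomial (Fin n) K} {a b e s : ℕ}
    (ha : h ^ a ∉ frobPow p n K e) (hb : h ^ b ∉ frobPow p n K s) :
    h ^ (p ^ s * a + b) ∉ frobPow p n K (e + s) := by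
  set q := p ^ s with hq
  have hq0 : 0 < q := pow_pos hp.pos s
  set P := h ^ a with hP
  set Q := h ^ b with hQ
  have hprod : h ^ (q * a + b) = P ^ q * Q := by
    rw [pow_add, mul_comm q a, pow_mul]
  rw [mem_frobPow_iff] at ha hb
  push_neg at ha hb
  obtain ⟨μ', hμ'supp, hμ'small⟩ := hb
  -- the set of small monomials of P, with an element of minimal total degree
  classical
  have hWne : (P.support.filter (fun m => ∀ i, m i < p ^ e)).Nonempty := by
    obtain ⟨m, hm, hsmall⟩ := ha
    exact ⟨m, Finset.mem_filter.mpr ⟨hm, fun i => hsmall i⟩⟩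
  obtain ⟨μ₀, hμ₀mem, hμ₀min⟩ := Finset.exists_min_image _ (fun m => ∑ i, m i) hWne
  obtain ⟨hμ₀supp, hμ₀small⟩ := Finset.mem_filter.mp hμ₀mem
  set σ : Fin n →₀ ℕ := q • μ₀ + μ' with hσ
  -- single-term coefficient
  have hcoeff : coeff σ (P ^ q * Q) = coeff μ₀ P ^ q * coeff μ' Q := by
    rw [coeff_mul]
    rw [Finset.sum_eq_single_of_mem (q • μ₀, μ') (Finset.HasAntidiagonal.mem_antidiagonal.mpr rfl)]
    · rw [coeff_pow_frob hp]
    · rintro ⟨u, w⟩ huw hne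
      have hsum : u + w = σ := Finset.HasAntidiagonal.mem_antidiagonal.mp huw
      by_contra hcon
      have hu : coeff u (P ^ q) ≠ 0 := fun h0 => hcon (by rw [h0, zero_mul])
      have hw : coeff w Q ≠ 0 := fun h0 => hcon (by rw [h0, mul_zero])
      obtain ⟨τ, hτsupp, rfl⟩ := support_pow_frob hp (mem_support_iff.mpr hu)
      -- τ ≤ μ₀ pointwise
      have hτle : ∀ i, τ i ≤ μ₀ i := by
        intro i
        have h1 : q * τ i ≤ q * μ₀ i + μ' i := by
          have h5 := DFunLike.congr_fun hsum i
          simp only [Finsupp.add_apply, Finsupp.smul_apply, smul_eq_mul, ← hq] at h5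
          have hσi : σ i = q * μ₀ i + μ' i := rfl
          omega
        have h2 : μ' i < q := hμ'small i
        by_contra hgt
        push_neg at hgt
        have : q * μ₀ i + q ≤ q * τ i := by
          rw [← Nat.mul_succ]; exact Nat.mul_le_mul_left _ hgt
        omega
      have hτW : τ ∈ P.support.filter (fun m => ∀ i, m i < p ^ e) :=
        Finset.mem_filter.mpr ⟨hτsupp, fun i => lt_of_le_of_lt (hτle i) (hμ₀small i)⟩
      have hτeq : τ = μ₀ := by
        have hle := hμ₀min τ hτW
        have : ∀ i, τ i = μ₀ i := by
          by_contra hcon2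
          push_neg at hcon2
          obtain ⟨j, hj⟩ := hcon2
          have : ∑ i, τ i < ∑ i, μ₀ i :=
            Finset.sum_lt_sum (fun i _ => hτle i) ⟨j, Finset.mem_univ j, lt_of_le_of_ne (hτle j) hj⟩
          omega
        ext i; exact this i
      subst hτeq
      have : w = μ' := by
        have := hsum
        rw [hσ] at this
        exact add_left_cancel this
      exact hne (by rw [this])
  have hcne : coeff σ (P ^ q * Q) ≠ 0 := by
    rw [hcoeff]
    exact mul_ne_zero (pow_ne_zero _ (mem_support_iff.mp hμ₀supp)) (mem_support_iff.mp hμ'supp)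
  rw [hprod, mem_frobPow_iff]
  push_neg
  refine ⟨σ, mem_support_iff.mpr hcne, fun i => ?_⟩
  have h1 : σ i = q * μ₀ i + μ' i := rfl
  have h2 : μ₀ i < p ^ e := hμ₀small i
  have h3 : μ' i < q := hμ'small i
  have h4 : p ^ (e + s) = q * p ^ e := by rw [pow_add, mul_comm]
  rw [h1, h4]
  calc q * μ₀ i + μ' i < q * μ₀ i + q := by omega
    _ ≤ q * p ^ e := by rw [← Nat.mul_succ]; exact Nat.mul_le_mul_left _ h2

lemma mem_mIdeal_iff {h : MvPolynomial (Fin n) K} :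
    h ∈ mIdeal n K ↔ ∀ m ∈ h.support, ∃ i, m i ≠ 0 := by
  rw [mIdeal, ← Set.image_univ, mem_ideal_span_X_image]
  simp

lemma le_sum_of_mem_support_pow {h : MvPolynomial (Fin n) K} (hm : h ∈ mIdeal n K)
    {N : ℕ} {m : Fin n →₀ ℕ} (hmem : m ∈ (h ^ N).support) : N ≤ ∑ i, m i := by
  classical
  induction N generalizing m with
  | zero => exact Nat.zero_le _
  | succ N ih =>
    have : (h ^ (N + 1)) = h * h ^ N := by rw [pow_succ, mul_comm]
    rw [this] at hmem
    obtain ⟨a, ha, b, hb, rfl⟩ := Finset.mem_add.mp (support_mul _ _ hmem)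
    obtain ⟨i, hi⟩ := mem_mIdeal_iff.mp hm a ha
    have h1 : 1 ≤ ∑ j, a j :=
      le_trans (Nat.one_le_iff_ne_zero.mpr hi) (Finset.single_le_sum (fun j _ => Nat.zero_le _) (Finset.mem_univ i))
    have h2 : N ≤ ∑ j, b j := ih hb
    have : ∑ j, (a + b) j = (∑ j, a j) + ∑ j, b j := by
      simp [Finsupp.add_apply, Finset.sum_add_distrib]
    omega

lemma bddAbove_nuSet {h : MvPolynomial (Fin n) K} (hm : h ∈ mIdeal n K) (e : ℕ) :
    BddAbove {N : ℕ | h ^ N ∉ frobPow p n K e} := by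
  refine ⟨n * p ^ e, fun N hN => ?_⟩
  rw [Set.mem_setOf_eq, mem_frobPow_iff] at hN
  push_neg at hN
  obtain ⟨m, hmem, hsmall⟩ := hN
  have h1 : N ≤ ∑ i, m i := le_sum_of_mem_support_pow hm hmem
  have h2 : ∑ i, m i ≤ n * p ^ e := by
    calc ∑ i, m i ≤ ∑ _i : Fin n, p ^ e :=
          Finset.sum_le_sum (fun i _ => le_of_lt (hsmall i))
      _ = n * p ^ e := by simp [Finset.sum_const, Finset.card_univ]
  omega

lemma zero_mem_nuSet (hp : p.Prime) (h : MvPolynomial (Fin n) K) (e : ℕ) :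
    (0 : ℕ) ∈ {N : ℕ | h ^ N ∉ frobPow p n K e} := by
  simp only [Set.mem_setOf_eq, pow_zero]
  exact one_not_mem_frobPow hp e

lemma pow_nu_not_mem (hp : p.Prime) {h : MvPolynomial (Fin n) K} (hm : h ∈ mIdeal n K) (e : ℕ) :
    h ^ nu p h e ∉ frobPow p n K e :=
  Nat.sSup_mem ⟨0, zero_mem_nuSet hp h e⟩ (bddAbove_nuSet hm e)

lemma le_nu {h : MvPolynomial (Fin n) K} (hm : h ∈ mIdeal n K) {e N : ℕ}
    (hN : h ^ N ∉ frobPow p n K e) : N ≤ nu p h e :=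
  le_csSup (bddAbove_nuSet hm e) hN

lemma pow_not_mem_of_le_nu (hp : p.Prime) {h : MvPolynomial (Fin n) K} (hm : h ∈ mIdeal n K)
    {e N : ℕ} (hN : N ≤ nu p h e) : h ^ N ∉ frobPow p n K e := by
  intro hcon
  refine pow_nu_not_mem hp hm e ?_
  have : h ^ nu p h e = h ^ N * h ^ (nu p h e - N) := by rw [← pow_add, Nat.add_sub_cancel' hN]
  rw [this]
  exact Ideal.mul_mem_right _ _ hcon

lemma nu_le (hp : p.Prime) {h : MvPolynomial (Fin n) K} (hm : h ∈ mIdeal n K) (e : ℕ) :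
    nu p h e ≤ n * p ^ e := by
  refine csSup_le ⟨0, zero_mem_nuSet hp h e⟩ fun N hN => ?_
  rw [Set.mem_setOf_eq, mem_frobPow_iff] at hN
  push_neg at hN
  obtain ⟨m, hmem, hsmall⟩ := hN
  have h1 : N ≤ ∑ i, m i := le_sum_of_mem_support_pow hm hmem
  have h2 : ∑ i, m i ≤ n * p ^ e := by
    calc ∑ i, m i ≤ ∑ _i : Fin n, p ^ e :=
          Finset.sum_le_sum (fun i _ => le_of_lt (hsmall i))
      _ = n * p ^ e := by simp [Finset.sum_const, Finset.card_univ]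
  omega

lemma bddAbove_fptSet (hp : p.Prime) {h : MvPolynomial (Fin n) K} (hm : h ∈ mIdeal n K) :
    BddAbove (Set.range fun e : ℕ => (nu p h e : ℝ) / (p : ℝ) ^ e) := by
  refine ⟨n, ?_⟩
  rintro x ⟨e, rfl⟩
  have hp0 : (0 : ℝ) < (p : ℝ) := by exact_mod_cast hp.pos
  have hpe : (0 : ℝ) < (p : ℝ) ^ e := by positivity
  rw [div_le_iff₀ hpe]
  have h1 := nu_le hp hm e
  calc ((nu p h e : ℝ)) ≤ ((n * p ^ e : ℕ) : ℝ) := by exact_mod_cast h1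
    _ = n * (p : ℝ) ^ e := by push_cast; ring

lemma le_fpt (hp : p.Prime) {h : MvPolynomial (Fin n) K} (hm : h ∈ mIdeal n K) (e : ℕ) :
    (nu p h e : ℝ) / (p : ℝ) ^ e ≤ fpt p h :=
  le_ciSup (bddAbove_fptSet hp hm) e

lemma fpt_le {h : MvPolynomial (Fin n) K} {c : ℝ}
    (hc : ∀ e, (nu p h e : ℝ) / (p : ℝ) ^ e ≤ c) : fpt p h ≤ c :=
  ciSup_le hc

lemma nu_zero_poly (hp : p.Prime) (e : ℕ) : nu p (0 : MvPolynomial (Fin n) K) e = 0 := by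
  have hset : {N : ℕ | (0 : MvPolynomial (Fin n) K) ^ N ∉ frobPow p n K e} = {0} := by
    ext N
    simp only [Set.mem_setOf_eq, Set.mem_singleton_iff]
    constructor
    · intro hN
      by_contra h0
      rw [zero_pow h0] at hN
      exact hN (Ideal.zero_mem _)
    · rintro rfl
      rw [pow_zero]
      exact one_not_mem_frobPow hp e
  rw [nu, hset, csSup_singleton]

lemma fpt_zero_poly (hp : p.Prime) : fpt p (0 : MvPolynomial (Fin n) K) = 0 := by
  have : ∀ e : ℕ, ((nu p (0 : MvPolynomial (Fin n) K) e : ℝ) / (p : ℝ) ^ e) = 0 := by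
    intro e; rw [nu_zero_poly hp]; simp
  rw [fpt]
  simp only [this]
  exact ciSup_const

lemma exists_pow_one_not_mem (hp : p.Prime) {h : MvPolynomial (Fin n) K} (h0 : h ≠ 0) :
    ∃ s : ℕ, h ^ 1 ∉ frobPow p n K s := by
  obtain ⟨m, hm⟩ := support_nonempty.mpr h0
  refine ⟨∑ i, m i, ?_⟩
  rw [pow_one, mem_frobPow_iff]
  push_neg
  refine ⟨m, hm, fun i => ?_⟩
  have h1 : m i ≤ ∑ j, m j := Finset.single_le_sum (fun j _ => Nat.zero_le _) (Finset.mem_univ i)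
  have h2 : (∑ j, m j) < p ^ (∑ j, m j) := Nat.lt_pow_self hp.one_lt
  omega

lemma fpt_pos (hp : p.Prime) [CharP K p] {h : MvPolynomial (Fin n) K} (hm : h ∈ mIdeal n K)
    (h0 : h ≠ 0) : 0 < fpt p h := by
  obtain ⟨s, hs⟩ := exists_pow_one_not_mem hp h0
  have h1 : 1 ≤ nu p h s := le_nu hm hs
  have hps : (0 : ℝ) < (p : ℝ) ^ s := by
    have : (0:ℝ) < (p:ℝ) := by exact_mod_cast hp.pos
    positivity
  calc (0 : ℝ) < 1 / (p : ℝ) ^ s := by positivity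
    _ ≤ (nu p h s : ℝ) / (p : ℝ) ^ s := by
        gcongr
        exact_mod_cast h1
    _ ≤ fpt p h := le_fpt hp hm s

end Aux

/-- if `p^L·fpt(f) =: N ∈ ℕ`, then for `g ∈ m`,
`fpt(f+g) ≤ fpt(f) ↔ (f+g)^N ∈ m^{[p^L]}`. -/
theorem stmt_13 (p : ℕ) (hp : p.Prime) (n : ℕ) (K : Type*) [Field K] [CharP K p]
    (f : MvPolynomial (Fin n) K) (hfm : f ∈ mIdeal n K) (hf0 : f ≠ 0)
    (L : ℕ) (N : ℕ) (hN : (N : ℝ) = (p : ℝ) ^ L * fpt p f)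
    (g : MvPolynomial (Fin n) K) (hgm : g ∈ mIdeal n K) :
    fpt p (f + g) ≤ fpt p f ↔ (f + g) ^ N ∈ frobPow p n K L := by
  set h := f + g with hh
  have hhm : h ∈ mIdeal n K := Ideal.add_mem _ hfm hgm
  have hp0 : (0 : ℝ) < (p : ℝ) := by exact_mod_cast hp.pos
  have hpL : (0 : ℝ) < (p : ℝ) ^ L := by positivity
  have hαpos : 0 < fpt p f := fpt_pos hp hfm hf0
  have hα : fpt p f = (N : ℝ) / (p : ℝ) ^ L := by
    rw [eq_div_iff hpL.ne', hN]; ring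
  have hNpos : 0 < N := by
    have h1 : (0 : ℝ) < (N : ℝ) := by rw [hN]; exact mul_pos hpL hαpos
    exact_mod_cast h1
  constructor
  · -- fpt(f+g) ≤ fpt f → (f+g)^N ∈ I_L
    intro hle
    by_contra hnot
    by_cases h0 : h = 0
    · rw [h0, zero_pow hNpos.ne'] at hnot
      exact hnot (Ideal.zero_mem _)
    · have hνL : N ≤ nu p h L := le_nu hhm hnot
      obtain ⟨s, hs⟩ := exists_pow_one_not_mem hp h0
      have hkey : h ^ (p ^ s * nu p h L + 1) ∉ frobPow p n K (L + s) :=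
        key_lemma hp (pow_nu_not_mem hp hhm L) hs
      have h2 : p ^ s * nu p h L + 1 ≤ nu p h (L + s) := le_nu hhm hkey
      have h3 : (nu p h (L + s) : ℝ) / (p : ℝ) ^ (L + s) ≤ fpt p h := le_fpt hp hhm (L + s)
      have hpLs : (0 : ℝ) < (p : ℝ) ^ (L + s) := by positivity
      have h4 : p ^ s * N + 1 ≤ nu p h (L + s) :=
        le_trans (by have := Nat.mul_le_mul_left (p ^ s) hνL; omega) h2
      have h5 : ((p ^ s * N + 1 : ℕ) : ℝ) / (p : ℝ) ^ (L + s) ≤ fpt p h := by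
        refine le_trans ?_ h3
        gcongr
      have h6 : (N : ℝ) / (p : ℝ) ^ L < ((p ^ s * N + 1 : ℕ) : ℝ) / (p : ℝ) ^ (L + s) := by
        rw [div_lt_div_iff₀ hpL hpLs]
        push_cast
        rw [pow_add]
        nlinarith [hpL, pow_pos hp0 s]
      rw [hα] at hle
      linarith
  · -- (f+g)^N ∈ I_L → fpt(f+g) ≤ fpt f
    intro hmem
    by_cases h0 : h = 0
    · rw [h0, fpt_zero_poly hp]
      exact le_of_lt hαpos
    · rw [hα]
      refine fpt_le fun e => ?_
      have hpe : (0 : ℝ) < (p : ℝ) ^ e := by positivity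
      rcases le_total e L with hcase | hcase
      · have hb0 : h ^ 0 ∉ frobPow p n K (L - e) := by
          rw [pow_zero]; exact one_not_mem_frobPow hp _
        have hkey : h ^ (p ^ (L - e) * nu p h e + 0) ∉ frobPow p n K (e + (L - e)) :=
          key_lemma hp (pow_nu_not_mem hp hhm e) hb0
        rw [add_zero, Nat.add_sub_cancel' hcase] at hkey
        have h2 : p ^ (L - e) * nu p h e ≤ nu p h L := le_nu hhm hkey
        have h3 : nu p h L < N := by
          by_contra hge
          push_neg at hge
          exact pow_not_mem_of_le_nu hp hhm hge hmem
        have h4 : ((p ^ (L - e) * nu p h e : ℕ) : ℝ) ≤ (N : ℝ) := by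
          exact_mod_cast le_trans h2 (le_of_lt h3)
        push_cast at h4
        rw [div_le_div_iff₀ hpe hpL]
        have hsplit : (p : ℝ) ^ L = (p : ℝ) ^ (L - e) * (p : ℝ) ^ e := by
          rw [← pow_add, Nat.sub_add_cancel hcase]
        rw [hsplit]
        nlinarith [mul_le_mul_of_nonneg_right h4 (le_of_lt hpe), hpe]
      · have hmem2 : h ^ (N * p ^ (e - L)) ∈ frobPow p n K (L + (e - L)) := by
          rw [pow_mul]; exact frob_mem hp hmem (e - L)
        rw [Nat.add_sub_cancel' hcase] at hmem2
        have h3 : nu p h e < N * p ^ (e - L) := by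
          by_contra hge
          push_neg at hge
          exact pow_not_mem_of_le_nu hp hhm hge hmem2
        have h4 : (nu p h e : ℝ) ≤ (N : ℝ) * (p : ℝ) ^ (e - L) := by
          exact_mod_cast le_of_lt h3
        rw [div_le_div_iff₀ hpe hpL]
        have hsplit : (p : ℝ) ^ e = (p : ℝ) ^ (e - L) * (p : ℝ) ^ L := by
          rw [← pow_add, Nat.sub_add_cancel hcase]
        rw [hsplit]
        nlinarith [mul_le_mul_of_nonneg_right h4 (le_of_lt hpL), hpL]
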